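/- Let q = ω/(1+ω) with ω > 0, let a = 1.01·ω(1+ω)/λ where λ = ω(1+ω)^b, and let (ζ_i) be the {0,1} Markov chain with ζ_0 = 0, P(0→1) = q, P(0→0) = 1−q, P(1→0) = 1. With N_h = #{1 ≤ i ≤ h : ζ_i = 0}, there exists a constant C = C(ω, b) such that E[a^{N_h}] ≤ C · r^h where r = (pa/2)(1 + sqrt(1 + 4q/(a p²))) with p = 1−q, and moreover r ≤ 1.01·ω/λ^{1/2} · (1+o_b(1)); in particular E[a^{N_h}] = O((1.02·ω/√λ)^h) for b sufficiently large. -/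

import Mathlib

set_option maxHeartbeats 1000000


open Finset

/-- One-step transition probability of the `{0,1}` chain (`true` = state `1`). -/
def chainStep (p q : ℝ) (prev next : Bool) : ℝ :=
  if prev then (if next then 0 else 1) else (if next then q else p)

/-- Probability of the trajectory `g 0, …, g h` of the chain started at `0`. -/
def trajProb (p q : ℝ) (h : ℕ) (g : Fin (h + 1) → Bool) : ℝ :=
  (if g 0 = false then 1 else 0) * ∏ i : Fin h, chainStep p q (g i.castSucc) (g i.succ)

/-- `E[a^{N_h}]` where `N_h = #{1 ≤ i ≤ h : ζ_i = 0}`. -/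
noncomputable def chainGenFun (p q a : ℝ) (h : ℕ) : ℝ :=
  ∑ g : Fin (h + 1) → Bool,
    trajProb p q h g * a ^ (univ.filter (fun i : Fin h => g i.succ = false)).card

/-- `q = ω/(1+ω)`. -/
noncomputable def qv (ω : ℝ) : ℝ := ω / (1 + ω)

/-- `λ = ω(1+ω)^b`. -/
noncomputable def lamv (b : ℕ) (ω : ℝ) : ℝ := ω * (1 + ω) ^ b

/-- `a = 1.01·ω(1+ω)/λ`. -/
noncomputable def av (b : ℕ) (ω : ℝ) : ℝ := 1.01 * ω * (1 + ω) / lamv b ω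

/-- `r = (pa/2)(1 + √(1 + 4q/(a p²)))` with `p = 1 − q`. -/
noncomputable def rv (b : ℕ) (ω : ℝ) : ℝ :=
  ((1 - qv ω) * av b ω / 2) *
    (1 + Real.sqrt (1 + 4 * qv ω / (av b ω * (1 - qv ω) ^ 2)))

/-- `E[a^{N_h}]` for the path chain with parameters determined by `ω` and `b`. -/
noncomputable def ENv (b : ℕ) (ω : ℝ) (h : ℕ) : ℝ :=
  chainGenFun (1 - qv ω) (qv ω) (av b ω) h

/-- `ω(b) = (1+δ) ln b / b`. -/
noncomputable def omb (δ : ℝ) (b : ℕ) : ℝ := (1 + δ) * Real.log b / b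

noncomputable def G (p q a : ℝ) : Bool → ℕ → ℝ
  | _, 0 => 1
  | false, (h+1) => p * a * G p q a false h + q * G p q a true h
  | true, (h+1) => a * G p q a false h

lemma G_zero (p q a : ℝ) (s : Bool) : G p q a s 0 = 1 := by cases s <;> rfl

lemma aux_eq (p q a : ℝ) : ∀ (h : ℕ) (s : Bool),
    (∑ g : Fin (h+1) → Bool, (if g 0 = s then (1:ℝ) else 0) *
      (∏ i : Fin h, chainStep p q (g i.castSucc) (g i.succ)) *
      a ^ (univ.filter (fun i : Fin h => g i.succ = false)).card) = G p q a s h := by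
  intro h
  induction h with
  | zero =>
    intro s
    refine Eq.trans (Fintype.sum_equiv (Equiv.funUnique (Fin 1) Bool) _
      (fun b : Bool => if b = s then (1:ℝ) else 0) ?_) ?_
    · intro g; simp [Equiv.funUnique]
    · cases s <;> simp [G_zero]
  | succ h ih =>
    intro s
    refine Eq.trans (Fintype.sum_equiv (Fin.consEquiv (fun _ : Fin (h+2) => Bool)).symm _
      (fun x : Bool × (Fin (h+1) → Bool) =>
        (if x.1 = s then (1:ℝ) else 0) * chainStep p q x.1 (x.2 0) *
        ((if x.2 0 = false then a else 1) *
          ((∏ i : Fin h, chainStep p q (x.2 i.castSucc) (x.2 i.succ)) *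
            a ^ (univ.filter (fun i : Fin h => x.2 i.succ = false)).card))) ?_) ?_
    · intro g
      simp only [Fin.consEquiv_symm_apply, Fin.tail]
      rw [Fin.prod_univ_succ, Finset.card_filter, Fin.sum_univ_succ, pow_add,
        Finset.card_filter]
      have h1 : ∀ i : Fin h, (i.succ : Fin (h+1)).castSucc = (i.castSucc).succ := by
        intro i; exact (Fin.succ_castSucc i).symm
      simp only [h1, Fin.castSucc_zero]
      rw [pow_ite, pow_one, pow_zero]; ring
    · have key : ∀ t : Bool, (∑ g' : Fin (h+1) → Bool,
          (if g' 0 = t then (1:ℝ) else 0) *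
            ((∏ i : Fin h, chainStep p q (g' i.castSucc) (g' i.succ)) *
              a ^ (univ.filter (fun i : Fin h => g' i.succ = false)).card)) = G p q a t h := by
        intro t; rw [← ih t]; exact Finset.sum_congr rfl fun g' _ => by ring
      have step1 : ∀ b : Bool, (∑ g' : Fin (h+1) → Bool,
          (if b = s then (1:ℝ) else 0) * chainStep p q b (g' 0) *
            ((if g' 0 = false then a else 1) *
              ((∏ i : Fin h, chainStep p q (g' i.castSucc) (g' i.succ)) *
                a ^ (univ.filter (fun i : Fin h => g' i.succ = false)).card)))
          = (if b = s then (1:ℝ) else 0) *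
              (chainStep p q b false * a * G p q a false h +
                chainStep p q b true * G p q a true h) := by
        intro b
        set c0 : ℝ := (if b = s then (1:ℝ) else 0) * chainStep p q b false * a with hc0
        set c1 : ℝ := (if b = s then (1:ℝ) else 0) * chainStep p q b true with hc1
        calc (∑ g' : Fin (h+1) → Bool,
              (if b = s then (1:ℝ) else 0) * chainStep p q b (g' 0) *
                ((if g' 0 = false then a else 1) *
                  ((∏ i : Fin h, chainStep p q (g' i.castSucc) (g' i.succ)) *
                    a ^ (univ.filter (fun i : Fin h => g' i.succ = false)).card)))
            = ∑ g' : Fin (h+1) → Bool,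
              (c0 * ((if g' 0 = false then (1:ℝ) else 0) *
                ((∏ i : Fin h, chainStep p q (g' i.castSucc) (g' i.succ)) *
                  a ^ (univ.filter (fun i : Fin h => g' i.succ = false)).card)) +
               c1 * ((if g' 0 = true then (1:ℝ) else 0) *
                ((∏ i : Fin h, chainStep p q (g' i.castSucc) (g' i.succ)) *
                  a ^ (univ.filter (fun i : Fin h => g' i.succ = false)).card))) := by
              refine Finset.sum_congr rfl fun g' _ => ?_
              cases hb : g' 0 <;> simp [hb, hc0, hc1] <;> ring
          _ = c0 * G p q a false h + c1 * G p q a true h := by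
              rw [Finset.sum_add_distrib, ← Finset.mul_sum, ← Finset.mul_sum,
                key false, key true]
          _ = (if b = s then (1:ℝ) else 0) *
              (chainStep p q b false * a * G p q a false h +
                chainStep p q b true * G p q a true h) := by
              rw [hc0, hc1]; ring
      refine Eq.trans ?_ (?_ : (∑ b : Bool, (if b = s then (1:ℝ) else 0) *
          (chainStep p q b false * a * G p q a false h +
            chainStep p q b true * G p q a true h)) = G p q a s (h+1))
      · rw [Fintype.sum_prod_type]; exact Finset.sum_congr rfl fun b _ => step1 b
      · cases s <;> simp [chainStep, G] <;> ring


lemma chainGenFun_eq (p q a : ℝ) (h : ℕ) :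
    (∑ g : Fin (h + 1) → Bool,
      ((if g 0 = false then (1:ℝ) else 0) *
        ∏ i : Fin h, chainStep p q (g i.castSucc) (g i.succ)) *
        a ^ (univ.filter (fun i : Fin h => g i.succ = false)).card) = G p q a false h :=
  aux_eq p q a h false

lemma Gbound (p q a : ℝ) (hp : 0 < p) (hq : 0 < q) (ha : 0 < a) :
    ∃ C : ℝ, 0 < C ∧ ∀ h : ℕ, G p q a false h ≤
      C * ((p * a / 2) * (1 + Real.sqrt (1 + 4 * q / (a * p ^ 2)))) ^ h := by
  set D : ℝ := 1 + 4 * q / (a * p ^ 2) with hDdef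
  have hD1 : 1 ≤ D := by
    have : 0 < 4 * q / (a * p ^ 2) := by positivity
    simp [hDdef]; linarith
  have hD0 : 0 ≤ D := by linarith
  set r : ℝ := (p * a / 2) * (1 + Real.sqrt D) with hrdef
  have hs : Real.sqrt D ^ 2 = D := Real.sq_sqrt hD0
  have hs1 : 1 ≤ Real.sqrt D := by
    rw [show (1:ℝ) = Real.sqrt 1 by simp]
    exact Real.sqrt_le_sqrt hD1
  have hD2 : D * (a ^ 2 * p ^ 2) = a ^ 2 * p ^ 2 + 4 * (a * q) := by
    rw [hDdef]; field_simp
  have key : r ^ 2 = a * p * r + a * q := by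
    rw [hrdef]; linear_combination (a ^ 2 * p ^ 2 / 4) * hs + (1 / 4) * hD2
  have hrap : a * p ≤ r := by
    calc a * p = p * a / 2 * 2 := by ring
    _ ≤ p * a / 2 * (1 + Real.sqrt D) := by
        apply mul_le_mul_of_nonneg_left (by linarith) (by positivity)
    _ = r := hrdef.symm
  have hr : 0 < r := by nlinarith
  refine ⟨max 1 ((p * a + q) / r), lt_of_lt_of_le one_pos (le_max_left _ _), ?_⟩
  set C : ℝ := max 1 ((p * a + q) / r) with hCdef
  have hC1 : 1 ≤ C := le_max_left _ _
  have hC0 : 0 < C := lt_of_lt_of_le one_pos hC1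
  have base0 : G p q a false 0 ≤ C * r ^ 0 := by
    simp [G_zero]; exact hC1
  have base1 : G p q a false 1 ≤ C * r ^ 1 := by
    have h2 : (p * a + q) / r ≤ C := le_max_right _ _
    have : p * a + q ≤ C * r := by
      rw [div_le_iff₀ hr] at h2; linarith
    simpa [G, G_zero] using this
  have main : ∀ h : ℕ, G p q a false h ≤ C * r ^ h ∧
      G p q a false (h + 1) ≤ C * r ^ (h + 1) := by
    intro h
    induction h with
    | zero => exact ⟨base0, base1⟩
    | succ h ih =>
      refine ⟨ih.2, ?_⟩
      have hGe : G p q a false (h + 2) =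
          p * a * G p q a false (h + 1) + q * (a * G p q a false h) := by
        show G p q a false (h + 2) = _
        rw [show G p q a false (h+2) = p * a * G p q a false (h+1) + q * G p q a true (h+1)
          from rfl, show G p q a true (h+1) = a * G p q a false h from rfl]
      have t1 : p * a * G p q a false (h + 1) ≤ p * a * (C * r ^ (h + 1)) :=
        mul_le_mul_of_nonneg_left ih.2 (by positivity)
      have t2 : q * (a * G p q a false h) ≤ q * (a * (C * r ^ h)) := by
        have := mul_le_mul_of_nonneg_left ih.1 ha.le
        exact mul_le_mul_of_nonneg_left this hq.le
      have e2 : p * a * (C * r ^ (h + 1)) + q * (a * (C * r ^ h)) = C * r ^ (h + 2) := by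
        rw [pow_succ, pow_succ, pow_succ]; linear_combination (-(C * r ^ h)) * key
      rw [hGe]; linarith
  exact fun h => (main h).1


lemma chainGenFun_eq' (p q a : ℝ) (h : ℕ) :
    chainGenFun p q a h = G p q a false h := by
  rw [chainGenFun]
  simp only [trajProb]
  exact aux_eq p q a h false

lemma part1 (b : ℕ) (ω : ℝ) (hω : 0 < ω) :
    ∃ C : ℝ, 0 < C ∧ ∀ h : ℕ, ENv b ω h ≤ C * rv b ω ^ h := by
  have h1ω : (0:ℝ) < 1 + ω := by linarith
  have hq : 0 < qv ω := div_pos hω h1ω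
  have hq1 : qv ω < 1 := by rw [qv, div_lt_one h1ω]; linarith
  have hp : 0 < 1 - qv ω := by linarith
  have hlam : 0 < lamv b ω := by unfold lamv; positivity
  have ha : 0 < av b ω := by unfold av; positivity
  obtain ⟨C, hC, hbd⟩ := Gbound (1 - qv ω) (qv ω) (av b ω) hp hq ha
  refine ⟨C, hC, fun h => ?_⟩
  have he : ENv b ω h = G (1 - qv ω) (qv ω) (av b ω) false h := by
    rw [ENv]; exact chainGenFun_eq' _ _ _ h
  rw [he, rv]
  exact hbd h

lemma rv_eq (b : ℕ) (ω : ℝ) (hω : 0 < ω) :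
    rv b ω = (1.01 * ω / (2 * lamv b ω)) *
      (1 + Real.sqrt (1 + 4 * lamv b ω / 1.01)) := by
  have h1ω : (0:ℝ) < 1 + ω := by linarith
  have hpw : (0:ℝ) < (1 + ω) ^ b := by positivity
  have hlam : 0 < lamv b ω := by unfold lamv; positivity
  have e1 : (1 - qv ω) * av b ω / 2 = 1.01 * ω / (2 * lamv b ω) := by
    rw [qv, av]
    field_simp
    ring
  have hω0 : ω ≠ 0 := ne_of_gt hω
  have h1ω0 : (1 + ω) ≠ 0 := ne_of_gt h1ω
  have hpw0 : ((1 + ω):ℝ) ^ b ≠ 0 := ne_of_gt hpw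
  have e2 : 4 * qv ω / (av b ω * (1 - qv ω) ^ 2) = 4 * lamv b ω / 1.01 := by
    rw [qv, av, lamv]
    rw [show (1:ℝ) - ω / (1 + ω) = 1 / (1 + ω) by field_simp; ring]
    field_simp
  rw [rv, e1, e2]

lemma rv_nonneg (b : ℕ) (ω : ℝ) (hω : 0 < ω) : 0 ≤ rv b ω := by
  have h1ω : (0:ℝ) < 1 + ω := by linarith
  have hlam : 0 < lamv b ω := by unfold lamv; positivity
  rw [rv_eq b ω hω]
  positivity

lemma rv_le (b : ℕ) (ω : ℝ) (hω : 0 < ω) (hlam : 10000 ≤ lamv b ω) :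
    rv b ω ≤ 1.02 * ω / Real.sqrt (lamv b ω) := by
  set L := lamv b ω with hLdef
  have hL : (0:ℝ) < L := by linarith
  set s := Real.sqrt L with hsdef
  have hs2 : s ^ 2 = L := Real.sq_sqrt hL.le
  have hs100 : (100:ℝ) ≤ s := by
    rw [hsdef, show (100:ℝ) = Real.sqrt (100^2) by rw [Real.sqrt_sq]; norm_num]
    exact Real.sqrt_le_sqrt (by norm_num; exact hlam)
  have hs0 : (0:ℝ) < s := by linarith
  have hsqrtle : Real.sqrt (1 + 4 * L / 1.01) ≤ 1 + 1.9902 * s := by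
    have h1 : 1 + 4 * L / 1.01 ≤ (1 + 1.9902 * s) ^ 2 := by
      rw [← hs2, show (1:ℝ) + 4 * s ^ 2 / 1.01 = 1 + (400/101) * s ^ 2 by ring]
      nlinarith [hs0.le, sq_nonneg s]
    calc Real.sqrt (1 + 4 * L / 1.01) ≤ Real.sqrt ((1 + 1.9902 * s) ^ 2) :=
          Real.sqrt_le_sqrt h1
      _ = 1 + 1.9902 * s := Real.sqrt_sq (by linarith)
  rw [rv_eq b ω hω]
  have hle : (1.01 * ω / (2 * L)) * (1 + (1 + 1.9902 * s)) ≤ 1.02 * ω / s := by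
    rw [div_mul_eq_mul_div, div_le_div_iff₀ (by positivity) hs0]
    nlinarith [hs2, hs100, hω.le, mul_nonneg hω.le hs0.le]
  calc (1.01 * ω / (2 * L)) * (1 + Real.sqrt (1 + 4 * L / 1.01))
      ≤ (1.01 * ω / (2 * L)) * (1 + (1 + 1.9902 * s)) := by
        apply mul_le_mul_of_nonneg_left (by linarith) (by positivity)
    _ ≤ 1.02 * ω / s := hle

lemma lam_large (δ : ℝ) (hδ : 0 < δ) :
    ∃ b₀ : ℕ, ∀ b : ℕ, b₀ ≤ b → 0 < omb δ b ∧ 10000 ≤ lamv b (omb δ b) := by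
  set M : ℝ := max (max 1 (16 * (1 + δ))) (Real.sqrt (30000 / δ)) with hMdef
  refine ⟨⌈Real.exp M⌉₊ + 1, fun b hb => ?_⟩
  have hbR : Real.exp M ≤ (b : ℝ) := by
    calc Real.exp M ≤ (⌈Real.exp M⌉₊ : ℝ) := Nat.le_ceil _
      _ ≤ (b : ℝ) := by exact_mod_cast Nat.le_of_succ_le hb
  have hb0 : (0:ℝ) < b := lt_of_lt_of_le (Real.exp_pos M) hbR
  set t := Real.log b with htdef
  have hlogb : M ≤ t := by
    rw [htdef, ← Real.log_exp M]
    exact Real.log_le_log (Real.exp_pos M) hbR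
  have ht1 : (1:ℝ) ≤ t := le_trans (le_trans (le_max_left _ _) (le_max_left _ _)) hlogb
  have ht16 : 16 * (1 + δ) ≤ t :=
    le_trans (le_trans (le_max_right _ _) (le_max_left _ _)) hlogb
  have htsq : 30000 / δ ≤ t ^ 2 := by
    have h1 : Real.sqrt (30000 / δ) ≤ t := le_trans (le_max_right _ _) hlogb
    have h2 : (0:ℝ) ≤ Real.sqrt (30000 / δ) := Real.sqrt_nonneg _
    nlinarith [Real.sq_sqrt (show (0:ℝ) ≤ 30000 / δ by positivity)]
  have ht0 : (0:ℝ) < t := by linarith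
  have hbt : (b : ℝ) = Real.exp t := (Real.exp_log hb0).symm
  set ω := omb δ b with hωdef
  have hωval : ω = (1 + δ) * t / b := rfl
  have hω : 0 < ω := by rw [hωval]; positivity
  have h1ω : (0:ℝ) < 1 + ω := by linarith
  refine ⟨hω, ?_⟩
  -- C2 : (1+δ)^2 t^2 ≤ b
  have hC2 : (1 + δ) ^ 2 * t ^ 2 ≤ (b : ℝ) := by
    have hexp4 : t / 4 ≤ Real.exp (t / 4) := by
      nlinarith [Real.add_one_le_exp (t / 4)]
    have hb4 : t ^ 4 / 256 ≤ (b : ℝ) := by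
      have e4 : (b : ℝ) = (Real.exp (t / 4)) ^ 4 := by
        rw [hbt, ← Real.exp_nat_mul]
        congr 1
        push_cast
        ring
      rw [e4]
      calc t ^ 4 / 256 = (t / 4) ^ 4 := by ring
        _ ≤ (Real.exp (t / 4)) ^ 4 := pow_le_pow_left₀ (by linarith) hexp4 4
    have h16 : (16 * (1 + δ)) ^ 2 ≤ t ^ 2 :=
      pow_le_pow_left₀ (by positivity) ht16 2
    nlinarith [hb4, h16, sq_nonneg t]
  -- bω = (1+δ)t ; bω² ≤ 1
  have hbω : (b : ℝ) * ω = (1 + δ) * t := by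
    rw [hωval]; field_simp
  have hbω2 : (b : ℝ) * ω ^ 2 ≤ 1 := by
    have : (b : ℝ) * ω ^ 2 = ((1 + δ) * t) ^ 2 / b := by
      rw [hωval]; field_simp
    rw [this, div_le_one hb0]
    calc ((1 + δ) * t) ^ 2 = (1 + δ) ^ 2 * t ^ 2 := by ring
      _ ≤ (b : ℝ) := hC2
  -- log(1+ω) ≥ ω/(1+ω) ≥ ω - ω²
  have hlog1ω : ω - ω ^ 2 ≤ Real.log (1 + ω) := by
    have h1 := Real.one_sub_inv_le_log_of_pos h1ω
    have h2 : ω - ω ^ 2 ≤ 1 - (1 + ω)⁻¹ := by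
      rw [show (1:ℝ) - (1 + ω)⁻¹ = ω / (1 + ω) by field_simp; ring]
      rw [le_div_iff₀ h1ω]
      nlinarith [pow_nonneg hω.le 3]
    linarith
  -- (1+ω)^b ≥ exp((1+δ)t - 1)
  have hpow : Real.exp ((1 + δ) * t - 1) ≤ (1 + ω) ^ b := by
    have e1 : ((1 + ω) : ℝ) ^ b = Real.exp (b * Real.log (1 + ω)) := by
      rw [Real.exp_nat_mul, Real.exp_log h1ω]
    rw [e1]
    apply Real.exp_le_exp.mpr
    have : (b : ℝ) * (ω - ω ^ 2) ≤ (b : ℝ) * Real.log (1 + ω) :=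
      mul_le_mul_of_nonneg_left hlog1ω hb0.le
    calc (1 + δ) * t - 1 ≤ (b : ℝ) * ω - (b : ℝ) * ω ^ 2 := by
          rw [← hbω]; linarith
      _ = (b : ℝ) * (ω - ω ^ 2) := by ring
      _ ≤ (b : ℝ) * Real.log (1 + ω) := this
  -- conclude
  have hexp3 : Real.exp 1 ≤ 3 := by
    have := Real.exp_one_lt_d9
    linarith
  have hfinal : 10000 ≤ lamv b ω := by
    have h1 : ω * Real.exp ((1 + δ) * t - 1) ≤ lamv b ω := by
      unfold lamv
      exact mul_le_mul_of_nonneg_left hpow hω.le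
    have h2 : Real.exp ((1 + δ) * t - 1) = Real.exp t * Real.exp (δ * t) / Real.exp 1 := by
      rw [← Real.exp_add, ← Real.exp_sub]; ring_nf
    have h3 : ω * Real.exp ((1 + δ) * t - 1) = (1 + δ) * t * Real.exp (δ * t) / Real.exp 1 := by
      rw [h2, hωval, hbt]
      field_simp
    have h4 : δ * t ≤ Real.exp (δ * t) := by
      nlinarith [Real.add_one_le_exp (δ * t)]
    have h5 : 30000 ≤ (1 + δ) * t * Real.exp (δ * t) := by
      have hδt : 0 < δ * t := by positivity
      calc (30000 : ℝ) ≤ δ * t ^ 2 := by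
            calc (30000:ℝ) = (30000 / δ) * δ := by field_simp
              _ ≤ t ^ 2 * δ := by apply mul_le_mul_of_nonneg_right htsq hδ.le
              _ = δ * t ^ 2 := by ring
        _ = t * (δ * t) := by ring
        _ ≤ t * Real.exp (δ * t) := by
            apply mul_le_mul_of_nonneg_left h4 (by linarith)
        _ ≤ (1 + δ) * t * Real.exp (δ * t) := by
            nlinarith [mul_nonneg (mul_nonneg hδ.le ht0.le) (Real.exp_pos (δ * t)).le]
    calc (10000 : ℝ) ≤ 30000 / Real.exp 1 := by
          rw [le_div_iff₀ (Real.exp_pos 1)]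
          nlinarith [hexp3]
      _ ≤ ((1 + δ) * t * Real.exp (δ * t)) / Real.exp 1 := by
          gcongr
      _ = ω * Real.exp ((1 + δ) * t - 1) := h3.symm
      _ ≤ lamv b ω := h1
  exact hfinal

/-- `E[a^{N_h}] ≤ C·r^h` with `r = (pa/2)(1+√(1+4q/(ap²)))`; moreover for
`ω = (1+δ)ln b/b` and `b` sufficiently large, `r ≤ 1.02·ω/√λ` and hence
`E[a^{N_h}] = O((1.02·ω/√λ)^h)`. -/
theorem stmt14 (δ : ℝ) (hδ : 0 < δ) :
    (∀ b : ℕ, 1 ≤ b → ∀ ω : ℝ, 0 < ω →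
      ∃ C : ℝ, 0 < C ∧ ∀ h : ℕ, ENv b ω h ≤ C * rv b ω ^ h) ∧
    (∃ b₀ : ℕ, ∀ b : ℕ, b₀ ≤ b →
      rv b (omb δ b) ≤ 1.02 * omb δ b / Real.sqrt (lamv b (omb δ b)) ∧
      ∃ C : ℝ, 0 < C ∧ ∀ h : ℕ,
        ENv b (omb δ b) h ≤
          C * (1.02 * omb δ b / Real.sqrt (lamv b (omb δ b))) ^ h) := by
  refine ⟨fun b _ ω hω => part1 b ω hω, ?_⟩
  obtain ⟨b₀, hb₀⟩ := lam_large δ hδ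
  refine ⟨b₀, fun b hb => ?_⟩
  obtain ⟨hω, hlam⟩ := hb₀ b hb
  refine ⟨rv_le b _ hω hlam, ?_⟩
  obtain ⟨C, hC, hbd⟩ := part1 b _ hω
  refine ⟨C, hC, fun h => ?_⟩
  calc ENv b (omb δ b) h ≤ C * rv b (omb δ b) ^ h := hbd h
    _ ≤ C * (1.02 * omb δ b / Real.sqrt (lamv b (omb δ b))) ^ h := by
        refine mul_le_mul_of_nonneg_left ?_ hC.le
        exact pow_le_pow_left₀ (rv_nonneg b _ hω) (rv_le b _ hω hlam) h
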